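/- With Z(x,t) = exp(−2x²/3 − 16t²/9)(1 + 5e^{4x} + 2e^{−√5 t + x} + 2e^{−√5 t + 5x} + 2e^{√5 t + x} + 2e^{√5 t + 5x} + 5e^{2x} + e^{6x}), r₁ = ∂²_x log Z, r₂ = ∂_x∂_t log Z, the Boussinesq equation holds: ∂r₂/∂t = −(1/3) ∂³r₁/∂x³ − 4 r₁ ∂r₁/∂x. -/

import Mathlib

open Real

noncomputable def lc (c0 c1 c2 c3 c4 c5 c6 c7 x t : ℝ) : ℝ :=
  c0 + c1 * Real.exp (4 * x) + c2 * Real.exp (-Real.sqrt 5 * t + x) +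
    c3 * Real.exp (-Real.sqrt 5 * t + 5 * x) + c4 * Real.exp (Real.sqrt 5 * t + x) +
    c5 * Real.exp (Real.sqrt 5 * t + 5 * x) + c6 * Real.exp (2 * x) + c7 * Real.exp (6 * x)

lemma dlc_x (c0 c1 c2 c3 c4 c5 c6 c7 x t : ℝ) :
    HasDerivAt (fun y => lc c0 c1 c2 c3 c4 c5 c6 c7 y t)
      (lc 0 (4*c1) c2 (5*c3) c4 (5*c5) (2*c6) (6*c7) x t) x := by
  unfold lc
  have h1 := (((hasDerivAt_id' (𝕜 := ℝ) x).const_mul (4:ℝ)).exp).const_mul c1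
  have h2 := (((hasDerivAt_id' (𝕜 := ℝ) x).const_add (-Real.sqrt 5 * t)).exp).const_mul c2
  have h3 := ((((hasDerivAt_id' (𝕜 := ℝ) x).const_mul (5:ℝ)).const_add (-Real.sqrt 5 * t)).exp).const_mul c3
  have h4 := (((hasDerivAt_id' (𝕜 := ℝ) x).const_add (Real.sqrt 5 * t)).exp).const_mul c4
  have h5 := ((((hasDerivAt_id' (𝕜 := ℝ) x).const_mul (5:ℝ)).const_add (Real.sqrt 5 * t)).exp).const_mul c5
  have h6 := (((hasDerivAt_id' (𝕜 := ℝ) x).const_mul (2:ℝ)).exp).const_mul c6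
  have h7 := (((hasDerivAt_id' (𝕜 := ℝ) x).const_mul (6:ℝ)).exp).const_mul c7
  have h := (((((((hasDerivAt_const x c0).add h1).add h2).add h3).add h4).add h5).add h6).add h7
  refine h.congr_deriv ?_
  ring

lemma dlc_t (c0 c1 c2 c3 c4 c5 c6 c7 x t : ℝ) :
    HasDerivAt (fun u => lc c0 c1 c2 c3 c4 c5 c6 c7 x u)
      (Real.sqrt 5 * lc 0 0 (-c2) (-c3) c4 c5 0 0 x t) t := by
  unfold lc
  have k2 := ((((hasDerivAt_id' (𝕜 := ℝ) t).const_mul (-Real.sqrt 5)).add_const x).exp).const_mul c2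
  have k3 := ((((hasDerivAt_id' (𝕜 := ℝ) t).const_mul (-Real.sqrt 5)).add_const (5 * x)).exp).const_mul c3
  have k4 := ((((hasDerivAt_id' (𝕜 := ℝ) t).const_mul (Real.sqrt 5)).add_const x).exp).const_mul c4
  have k5 := ((((hasDerivAt_id' (𝕜 := ℝ) t).const_mul (Real.sqrt 5)).add_const (5 * x)).exp).const_mul c5
  have h := (((((((hasDerivAt_const t c0).add
      (hasDerivAt_const t (c1 * Real.exp (4 * x)))).add k2).add k3).add k4).add k5).add
      (hasDerivAt_const t (c6 * Real.exp (2 * x)))).add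
      (hasDerivAt_const t (c7 * Real.exp (6 * x)))
  refine h.congr_deriv ?_
  ring

noncomputable def Fl (x t : ℝ) : ℝ := lc 1 5 2 2 2 2 5 1 x t
noncomputable def Flx (x t : ℝ) : ℝ := lc 0 20 2 10 2 10 10 6 x t
noncomputable def Flxx (x t : ℝ) : ℝ := lc 0 80 2 50 2 50 20 36 x t
noncomputable def Flxxx (x t : ℝ) : ℝ := lc 0 320 2 250 2 250 40 216 x t
noncomputable def Flxxxx (x t : ℝ) : ℝ := lc 0 1280 2 1250 2 1250 80 1296 x t
noncomputable def Flxxxxx (x t : ℝ) : ℝ := lc 0 5120 2 6250 2 6250 160 7776 x t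
noncomputable def Gl (x t : ℝ) : ℝ := lc 0 0 (-2) (-2) 2 2 0 0 x t
noncomputable def Glx (x t : ℝ) : ℝ := lc 0 0 (-2) (-10) 2 10 0 0 x t
noncomputable def Hl (x t : ℝ) : ℝ := lc 0 0 2 2 2 2 0 0 x t
noncomputable def Hlx (x t : ℝ) : ℝ := lc 0 0 2 10 2 10 0 0 x t

lemma Fl_pos (x t : ℝ) : 0 < Fl x t := by unfold Fl lc; positivity

lemma dFl (x t : ℝ) : HasDerivAt (fun y => Fl y t) (Flx x t) x := by
  have h := dlc_x 1 5 2 2 2 2 5 1 x t; unfold Fl Flx; norm_num at h; exact h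

lemma dFlx (x t : ℝ) : HasDerivAt (fun y => Flx y t) (Flxx x t) x := by
  have h := dlc_x 0 20 2 10 2 10 10 6 x t; unfold Flx Flxx; norm_num at h; exact h

lemma dFlxx (x t : ℝ) : HasDerivAt (fun y => Flxx y t) (Flxxx x t) x := by
  have h := dlc_x 0 80 2 50 2 50 20 36 x t; unfold Flxx Flxxx; norm_num at h; exact h

lemma dFlxxx (x t : ℝ) : HasDerivAt (fun y => Flxxx y t) (Flxxxx x t) x := by
  have h := dlc_x 0 320 2 250 2 250 40 216 x t; unfold Flxxx Flxxxx; norm_num at h; exact h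

lemma dFlxxxx (x t : ℝ) : HasDerivAt (fun y => Flxxxx y t) (Flxxxxx x t) x := by
  have h := dlc_x 0 1280 2 1250 2 1250 80 1296 x t; unfold Flxxxx Flxxxxx; norm_num at h; exact h

lemma dGl (x t : ℝ) : HasDerivAt (fun y => Gl y t) (Glx x t) x := by
  have h := dlc_x 0 0 (-2) (-2) 2 2 0 0 x t; unfold Gl Glx; norm_num at h; exact h

lemma dFl_t (x t : ℝ) : HasDerivAt (fun u => Fl x u) (Real.sqrt 5 * Gl x t) t := by
  have h := dlc_t 1 5 2 2 2 2 5 1 x t; unfold Fl Gl; norm_num at h; exact h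

lemma dFlx_t (x t : ℝ) : HasDerivAt (fun u => Flx x u) (Real.sqrt 5 * Glx x t) t := by
  have h := dlc_t 0 20 2 10 2 10 10 6 x t; unfold Flx Glx; norm_num at h; exact h

lemma dGl_t (x t : ℝ) : HasDerivAt (fun u => Gl x u) (Real.sqrt 5 * Hl x t) t := by
  have h := dlc_t 0 0 (-2) (-2) 2 2 0 0 x t; unfold Gl Hl; norm_num at h; exact h

lemma dGlx_t (x t : ℝ) : HasDerivAt (fun u => Glx x u) (Real.sqrt 5 * Hlx x t) t := by
  have h := dlc_t 0 0 (-2) (-10) 2 10 0 0 x t; unfold Glx Hlx; norm_num at h; exact h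

noncomputable def R2 (x t : ℝ) : ℝ :=
  -4/3 + (Flxx x t * Fl x t - Flx x t ^ 2) / Fl x t ^ 2
noncomputable def R3 (x t : ℝ) : ℝ :=
  (Flxxx x t * Fl x t ^ 2 - 3 * Flxx x t * Flx x t * Fl x t + 2 * Flx x t ^ 3) / Fl x t ^ 3
noncomputable def R4 (x t : ℝ) : ℝ :=
  (Flxxxx x t * Fl x t ^ 3 - 4 * Flxxx x t * Flx x t * Fl x t ^ 2 - 3 * Flxx x t ^ 2 * Fl x t ^ 2
    + 12 * Flxx x t * Flx x t ^ 2 * Fl x t - 6 * Flx x t ^ 4) / Fl x t ^ 4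
noncomputable def R5 (x t : ℝ) : ℝ :=
  (Flxxxxx x t * Fl x t ^ 4 - 5 * Flxxxx x t * Flx x t * Fl x t ^ 3
    - 10 * Flxxx x t * Flxx x t * Fl x t ^ 3 + 20 * Flxxx x t * Flx x t ^ 2 * Fl x t ^ 2
    + 30 * Flxx x t ^ 2 * Flx x t * Fl x t ^ 2 - 60 * Flxx x t * Flx x t ^ 3 * Fl x t
    + 24 * Flx x t ^ 5) / Fl x t ^ 5
noncomputable def T2 (x t : ℝ) : ℝ :=
  Real.sqrt 5 * (Glx x t * Fl x t - Gl x t * Flx x t) / Fl x t ^ 2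
noncomputable def T3 (x t : ℝ) : ℝ :=
  5 * (Hlx x t * Fl x t ^ 2 - Hl x t * Flx x t * Fl x t - 2 * Gl x t * Glx x t * Fl x t
    + 2 * Gl x t ^ 2 * Flx x t) / Fl x t ^ 3

lemma hQx (x t : ℝ) :
    HasDerivAt (fun y => -2 * y ^ 2 / 3 - 16 * t ^ 2 / 9 + Real.log (Fl y t))
      (-4 * x / 3 + Flx x t / Fl x t) x := by
  have h := ((((hasDerivAt_pow 2 x).const_mul (-2:ℝ)).div_const 3).sub_const
      (16 * t ^ 2 / 9)).add ((dFl x t).log (Fl_pos x t).ne')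
  refine h.congr_deriv ?_
  push_cast
  ring

lemma hQt (x t : ℝ) :
    HasDerivAt (fun u => -2 * x ^ 2 / 3 - 16 * u ^ 2 / 9 + Real.log (Fl x u))
      (-32 * t / 9 + Real.sqrt 5 * Gl x t / Fl x t) t := by
  have h := ((hasDerivAt_const t (-2 * x ^ 2 / 3)).sub
      (((hasDerivAt_pow 2 t).const_mul (16:ℝ)).div_const 9)).add
      ((dFl_t x t).log (Fl_pos x t).ne')
  refine h.congr_deriv ?_
  push_cast
  ring

lemma hR2 (x t : ℝ) :
    HasDerivAt (fun y => -4 * y / 3 + Flx y t / Fl y t) (R2 x t) x := by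
  have h := (((hasDerivAt_id' (𝕜 := ℝ) x).const_mul (-4:ℝ)).div_const 3).add
      ((dFlx x t).div (dFl x t) (Fl_pos x t).ne')
  unfold R2
  refine h.congr_deriv ?_
  ring

lemma hR3 (x t : ℝ) : HasDerivAt (fun y => R2 y t) (R3 x t) x := by
  have hne := (Fl_pos x t).ne'
  unfold R2 R3
  have h := (hasDerivAt_const x (-4/3 : ℝ)).add
      ((((dFlxx x t).mul (dFl x t)).sub ((dFlx x t).pow 2)).div
        ((dFl x t).pow 2) (pow_ne_zero 2 hne))
  refine h.congr_deriv ?_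
  push_cast
  simp only [Pi.mul_apply, Pi.pow_apply, Pi.sub_apply, Pi.add_apply]
  field_simp
  ring

lemma hR4 (x t : ℝ) : HasDerivAt (fun y => R3 y t) (R4 x t) x := by
  have hne := (Fl_pos x t).ne'
  unfold R3 R4
  have t1 := (dFlxxx x t).mul ((dFl x t).pow 2)
  have t2 := (((dFlxx x t).const_mul (3:ℝ)).mul (dFlx x t)).mul (dFl x t)
  have t3 := ((dFlx x t).pow 3).const_mul (2:ℝ)
  have h := ((t1.sub t2).add t3).div ((dFl x t).pow 3) (pow_ne_zero 3 hne)
  refine h.congr_deriv ?_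
  push_cast
  simp only [Pi.mul_apply, Pi.pow_apply, Pi.sub_apply, Pi.add_apply]
  field_simp
  ring

lemma hR5 (x t : ℝ) : HasDerivAt (fun y => R4 y t) (R5 x t) x := by
  have hne := (Fl_pos x t).ne'
  unfold R4 R5
  have t1 := (dFlxxxx x t).mul ((dFl x t).pow 3)
  have t2 := (((dFlxxx x t).const_mul (4:ℝ)).mul (dFlx x t)).mul ((dFl x t).pow 2)
  have t3 := (((dFlxx x t).pow 2).const_mul (3:ℝ)).mul ((dFl x t).pow 2)
  have t4 := (((dFlxx x t).const_mul (12:ℝ)).mul ((dFlx x t).pow 2)).mul (dFl x t)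
  have t5 := ((dFlx x t).pow 4).const_mul (6:ℝ)
  have h := ((((t1.sub t2).sub t3).add t4).sub t5).div ((dFl x t).pow 4) (pow_ne_zero 4 hne)
  refine h.congr_deriv ?_
  push_cast
  simp only [Pi.mul_apply, Pi.pow_apply, Pi.sub_apply, Pi.add_apply]
  field_simp
  ring

lemma hT2 (x t : ℝ) :
    HasDerivAt (fun y => -32 * t / 9 + Real.sqrt 5 * Gl y t / Fl y t) (T2 x t) x := by
  have h := (hasDerivAt_const x (-32 * t / 9)).add
      (((dGl x t).const_mul (Real.sqrt 5)).div (dFl x t) (Fl_pos x t).ne')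
  unfold T2
  refine h.congr_deriv ?_
  ring

lemma hT3 (x t : ℝ) : HasDerivAt (fun u => T2 x u) (T3 x t) t := by
  have hne := (Fl_pos x t).ne'
  unfold T2 T3
  have num := (((dGlx_t x t).mul (dFl_t x t)).sub
      ((dGl_t x t).mul (dFlx_t x t))).const_mul (Real.sqrt 5)
  have h := num.div ((dFl_t x t).pow 2) (pow_ne_zero 2 hne)
  refine h.congr_deriv ?_
  set s := Real.sqrt 5 with hs
  have h5 : s * s = 5 := Real.mul_self_sqrt (by norm_num)
  rw [← h5]
  push_cast
  simp only [Pi.mul_apply, Pi.pow_apply, Pi.sub_apply, Pi.add_apply]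
  field_simp
  ring


noncomputable def GE (x t : ℝ) : ℝ :=
  5 * Hl x t * Fl x t - 5 * Gl x t ^ 2
    + (Flxxxx x t * Fl x t - 4 * Flxxx x t * Flx x t + 3 * Flxx x t ^ 2) / 3
    - 16 / 3 * (Flxx x t * Fl x t - Flx x t ^ 2)

noncomputable def GXE (x t : ℝ) : ℝ :=
  5 * Hlx x t * Fl x t + 5 * Hl x t * Flx x t - 10 * Gl x t * Glx x t
    + (Flxxxxx x t * Fl x t - 3 * Flxxxx x t * Flx x t + 2 * Flxxx x t * Flxx x t) / 3
    - 16 / 3 * (Flxxx x t * Fl x t - Flxx x t * Flx x t)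

set_option maxHeartbeats 1000000 in
lemma hGE (x t : ℝ) : GE x t = 0 := by
  have p2 : Real.exp (2 * x) = Real.exp x ^ 2 := by
    rw [show (2:ℝ) * x = x + x by ring, Real.exp_add]; ring
  have p4 : Real.exp (4 * x) = Real.exp x ^ 4 := by
    rw [show (4:ℝ) * x = x + x + x + x by ring, Real.exp_add, Real.exp_add, Real.exp_add]; ring
  have p6 : Real.exp (6 * x) = Real.exp x ^ 6 := by
    rw [show (6:ℝ) * x = x + x + x + x + x + x by ring, Real.exp_add, Real.exp_add,
      Real.exp_add, Real.exp_add, Real.exp_add]; ring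
  have q1 : Real.exp (-Real.sqrt 5 * t + x) = Real.exp x / Real.exp (Real.sqrt 5 * t) := by
    rw [show -Real.sqrt 5 * t + x = x - Real.sqrt 5 * t by ring, Real.exp_sub]
  have q2 : Real.exp (-Real.sqrt 5 * t + 5 * x)
      = Real.exp x ^ 5 / Real.exp (Real.sqrt 5 * t) := by
    rw [show -Real.sqrt 5 * t + 5 * x = (x + x + x + x + x) - Real.sqrt 5 * t by ring,
      Real.exp_sub, Real.exp_add, Real.exp_add, Real.exp_add, Real.exp_add]; ring
  have q3 : Real.exp (Real.sqrt 5 * t + x) = Real.exp x * Real.exp (Real.sqrt 5 * t) := by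
    rw [Real.exp_add]; ring
  have q4 : Real.exp (Real.sqrt 5 * t + 5 * x)
      = Real.exp x ^ 5 * Real.exp (Real.sqrt 5 * t) := by
    rw [Real.exp_add, show (5:ℝ) * x = x + x + x + x + x by ring, Real.exp_add, Real.exp_add,
      Real.exp_add, Real.exp_add]; ring
  unfold GE Fl Flx Flxx Flxxx Flxxxx Gl Hl lc
  simp only [p2, p4, p6, q1, q2, q3, q4]
  field_simp
  ring

set_option maxHeartbeats 1000000 in
lemma hGXE (x t : ℝ) : GXE x t = 0 := by
  have p2 : Real.exp (2 * x) = Real.exp x ^ 2 := by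
    rw [show (2:ℝ) * x = x + x by ring, Real.exp_add]; ring
  have p4 : Real.exp (4 * x) = Real.exp x ^ 4 := by
    rw [show (4:ℝ) * x = x + x + x + x by ring, Real.exp_add, Real.exp_add, Real.exp_add]; ring
  have p6 : Real.exp (6 * x) = Real.exp x ^ 6 := by
    rw [show (6:ℝ) * x = x + x + x + x + x + x by ring, Real.exp_add, Real.exp_add,
      Real.exp_add, Real.exp_add, Real.exp_add]; ring
  have q1 : Real.exp (-Real.sqrt 5 * t + x) = Real.exp x / Real.exp (Real.sqrt 5 * t) := by
    rw [show -Real.sqrt 5 * t + x = x - Real.sqrt 5 * t by ring, Real.exp_sub]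
  have q2 : Real.exp (-Real.sqrt 5 * t + 5 * x)
      = Real.exp x ^ 5 / Real.exp (Real.sqrt 5 * t) := by
    rw [show -Real.sqrt 5 * t + 5 * x = (x + x + x + x + x) - Real.sqrt 5 * t by ring,
      Real.exp_sub, Real.exp_add, Real.exp_add, Real.exp_add, Real.exp_add]; ring
  have q3 : Real.exp (Real.sqrt 5 * t + x) = Real.exp x * Real.exp (Real.sqrt 5 * t) := by
    rw [Real.exp_add]; ring
  have q4 : Real.exp (Real.sqrt 5 * t + 5 * x)
      = Real.exp x ^ 5 * Real.exp (Real.sqrt 5 * t) := by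
    rw [Real.exp_add, show (5:ℝ) * x = x + x + x + x + x by ring, Real.exp_add, Real.exp_add,
      Real.exp_add, Real.exp_add]; ring
  unfold GXE Fl Flx Flxx Flxxx Flxxxx Flxxxxx Gl Glx Hl Hlx lc
  simp only [p2, p4, p6, q1, q2, q3, q4]
  field_simp
  ring

set_option maxHeartbeats 2000000 in
lemma habs (x t : ℝ) :
    T3 x t - (-(1 / 3) * R5 x t - 4 * R2 x t * R3 x t)
      = GXE x t / Fl x t ^ 2 - 2 * GE x t * Flx x t / Fl x t ^ 3 := by
  have hF := (Fl_pos x t).ne'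
  unfold T3 R5 R2 R3 GE GXE
  field_simp
  ring

lemma key (x t : ℝ) : T3 x t = -(1 / 3) * R5 x t - 4 * R2 x t * R3 x t := by
  have h := habs x t
  rw [hGE, hGXE] at h
  simp at h
  linarith

lemma E1 (a b : ℝ) :
    deriv (fun u => -2 * a ^ 2 / 3 - 16 * u ^ 2 / 9 + Real.log (Fl a u)) b
      = -32 * b / 9 + Real.sqrt 5 * Gl a b / Fl a b := (hQt a b).deriv

lemma E1x (a b : ℝ) :
    deriv (fun y => -2 * y ^ 2 / 3 - 16 * b ^ 2 / 9 + Real.log (Fl y b)) a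
      = -4 * a / 3 + Flx a b / Fl a b := (hQx a b).deriv

lemma E2 (a b : ℝ) :
    deriv (fun y => -4 * y / 3 + Flx y b / Fl y b) a = R2 a b := (hR2 a b).deriv

lemma E2t (a b : ℝ) :
    deriv (fun y => -32 * b / 9 + Real.sqrt 5 * Gl y b / Fl y b) a = T2 a b := (hT2 a b).deriv

lemma E3 (a b : ℝ) : deriv (fun y => R2 y b) a = R3 a b := (hR3 a b).deriv
lemma E4 (a b : ℝ) : deriv (fun y => R3 y b) a = R4 a b := (hR4 a b).deriv
lemma E5 (a b : ℝ) : deriv (fun y => R4 y b) a = R5 a b := (hR5 a b).deriv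
lemma E3t (a b : ℝ) : deriv (fun u => T2 a u) b = T3 a b := (hT3 a b).deriv

/-- The explicit 3-soliton tau-function Z solves the Boussinesq equation in normal
coordinates: ∂r₂/∂t = −(1/3) ∂³r₁/∂x³ − 4 r₁ ∂r₁/∂x, where r₁ = ∂²_x log Z,
r₂ = ∂_x∂_t log Z. -/
theorem soliton_solves_boussinesq :
    let L : ℝ → ℝ → ℝ := fun x t =>
      Real.log (Real.exp (-2 * x ^ 2 / 3 - 16 * t ^ 2 / 9) *
        (1 + 5 * Real.exp (4 * x) + 2 * Real.exp (-Real.sqrt 5 * t + x) +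
          2 * Real.exp (-Real.sqrt 5 * t + 5 * x) + 2 * Real.exp (Real.sqrt 5 * t + x) +
          2 * Real.exp (Real.sqrt 5 * t + 5 * x) + 5 * Real.exp (2 * x) +
          Real.exp (6 * x)))
    let r₁ : ℝ → ℝ → ℝ := fun x t =>
      deriv (fun x' => deriv (fun x'' => L x'' t) x') x
    let r₂ : ℝ → ℝ → ℝ := fun x t =>
      deriv (fun x' => deriv (fun t' => L x' t') t) x
    ∀ x t : ℝ,
      deriv (fun t' => r₂ x t') t =
        -(1 / 3) * deriv (fun x' => deriv (fun x'' => deriv (fun y => r₁ y t) x'') x') x -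
          4 * r₁ x t * deriv (fun x' => r₁ x' t) x := by
  intro L r₁ r₂ x t
  have hsum : ∀ a b : ℝ,
      (1 + 5 * Real.exp (4 * a) + 2 * Real.exp (-Real.sqrt 5 * b + a) +
        2 * Real.exp (-Real.sqrt 5 * b + 5 * a) + 2 * Real.exp (Real.sqrt 5 * b + a) +
        2 * Real.exp (Real.sqrt 5 * b + 5 * a) + 5 * Real.exp (2 * a) +
        Real.exp (6 * a)) = Fl a b := by
    intro a b; unfold Fl lc; ring
  have hL2 : L = fun a b => -2 * a ^ 2 / 3 - 16 * b ^ 2 / 9 + Real.log (Fl a b) := by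
    funext a b
    show Real.log (Real.exp (-2 * a ^ 2 / 3 - 16 * b ^ 2 / 9) *
        (1 + 5 * Real.exp (4 * a) + 2 * Real.exp (-Real.sqrt 5 * b + a) +
          2 * Real.exp (-Real.sqrt 5 * b + 5 * a) + 2 * Real.exp (Real.sqrt 5 * b + a) +
          2 * Real.exp (Real.sqrt 5 * b + 5 * a) + 5 * Real.exp (2 * a) +
          Real.exp (6 * a))) = _
    rw [hsum, Real.log_mul (Real.exp_ne_zero _) (Fl_pos a b).ne', Real.log_exp]
  have hr1 : r₁ = fun x t => deriv (fun x' => deriv (fun x'' => L x'' t) x') x := rfl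
  have hr2 : r₂ = fun x t => deriv (fun x' => deriv (fun t' => L x' t') t) x := rfl
  simp only [hr1, hr2, hL2, E1, E1x, E2, E2t, E3, E3t, E4, E5]
  exact key x t
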